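/- Let Z be the completely dephasing qubit channel on 2×2 complex matrices, Z(X) = diag(X₀₀, X₁₁) (equivalently, Z has Kraus operators |0⟩⟨0| and |1⟩⟨1|). Let ω be a density matrix and let ρ be a diagonal (decoherent) density matrix. Then there exists a density matrix γ with Z(γ) positive definite such that the Petz recovery map satisfies P_{Z,γ}(ω) = ρ if and only if ρ = Z(ω), i.e. if and only if ρ and ω have the same diagonal entries in the computational basis. -/

import Mathlib

open Matrix BigOperators
open scoped ComplexOrder Classical

/-- Positive-semidefinite matrix square root (0 if the matrix is not psd). -/
noncomputable def msqrt {n : ℕ} (A : Matrix (Fin n) (Fin n) ℂ) : Matrix (Fin n) (Fin n) ℂ :=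
  if h : A.PosSemidef then
    h.1.eigenvectorUnitary.1 * diagonal ((↑) ∘ (√·) ∘ h.1.eigenvalues) *
      (star h.1.eigenvectorUnitary : Matrix (Fin n) (Fin n) ℂ)
  else 0

/-- The quantum channel with Kraus operators `K i`: `E(X) = ∑ i, K i * X * (K i)ᴴ`. -/
noncomputable def kchan {n m : ℕ} (K : Fin m → Matrix (Fin n) (Fin n) ℂ)
    (X : Matrix (Fin n) (Fin n) ℂ) : Matrix (Fin n) (Fin n) ℂ :=
  ∑ i, K i * X * (K i)ᴴ

/-- The adjoint channel: `E†(Y) = ∑ i, (K i)ᴴ * Y * K i`. -/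
noncomputable def kchanAdj {n m : ℕ} (K : Fin m → Matrix (Fin n) (Fin n) ℂ)
    (Y : Matrix (Fin n) (Fin n) ℂ) : Matrix (Fin n) (Fin n) ℂ :=
  ∑ i, (K i)ᴴ * Y * K i

/-- Density matrix: positive semidefinite with trace 1. -/
def IsDensity {n : ℕ} (ρ : Matrix (Fin n) (Fin n) ℂ) : Prop :=
  ρ.PosSemidef ∧ ρ.trace = 1

/-- The Petz recovery map of the Kraus channel `K` with prior `γ`:
`P_{E,γ}(ω) = √γ · E†( E(γ)^{-1/2} ω E(γ)^{-1/2} ) · √γ`. -/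
noncomputable def petz {n m : ℕ} (K : Fin m → Matrix (Fin n) (Fin n) ℂ)
    (γ ω : Matrix (Fin n) (Fin n) ℂ) : Matrix (Fin n) (Fin n) ℂ :=
  msqrt γ * kchanAdj K ((msqrt (kchan K γ))⁻¹ * ω * (msqrt (kchan K γ))⁻¹) * msqrt γ

/-- Kraus operators |0⟩⟨0|, |1⟩⟨1| of the completely dephasing qubit channel. -/
noncomputable def dephK : Fin 2 → Matrix (Fin 2) (Fin 2) ℂ :=
  fun i => Matrix.single i i 1

/- ---------- auxiliary lemmas ---------- -/

open scoped MatrixOrder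

lemma msqrt_eq_cfc {n : ℕ} {A : Matrix (Fin n) (Fin n) ℂ} (hA : A.PosSemidef) :
    msqrt A = CFC.sqrt A := by
  rw [msqrt, dif_pos hA, CFC.sqrt_eq_cfc, cfc_nnreal_eq_real _ A, hA.1.cfc_eq]
  simp only [IsHermitian.cfc, Unitary.conjStarAlgAut_apply, Real.coe_sqrt, Real.coe_toNNReal']
  congr 3
  funext i
  simp [max_eq_left (hA.eigenvalues_nonneg i)]

lemma kchan_deph (X : Matrix (Fin 2) (Fin 2) ℂ) :
    kchan dephK X = Matrix.diagonal (fun i => X i i) := by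
  ext i j
  fin_cases i <;> fin_cases j <;>
    simp [kchan, dephK, Matrix.sum_apply, Matrix.mul_apply, Matrix.single,
      Matrix.diagonal, Fin.sum_univ_two]

lemma kchanAdj_deph (X : Matrix (Fin 2) (Fin 2) ℂ) :
    kchanAdj dephK X = Matrix.diagonal (fun i => X i i) := by
  ext i j
  fin_cases i <;> fin_cases j <;>
    simp [kchanAdj, dephK, Matrix.sum_apply, Matrix.mul_apply, Matrix.single,
      Matrix.diagonal, Fin.sum_univ_two]

lemma msqrt_eq {n : ℕ} {A B : Matrix (Fin n) (Fin n) ℂ} (hB : B.PosSemidef)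
    (h : B * B = A) : msqrt A = B := by
  have hA : A.PosSemidef := by
    rw [← h]; nth_rewrite 1 [← hB.1]; exact Matrix.posSemidef_conjTranspose_mul_self B
  rw [msqrt_eq_cfc hA]
  exact CFC.sqrt_unique h hB.nonneg

lemma msqrt_psd {n : ℕ} {A : Matrix (Fin n) (Fin n) ℂ} (hA : A.PosSemidef) :
    (msqrt A).PosSemidef := by
  rw [msqrt_eq_cfc hA]; exact (CFC.sqrt_nonneg A).posSemidef

lemma msqrt_mul_self {n : ℕ} {A : Matrix (Fin n) (Fin n) ℂ} (hA : A.PosSemidef) :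
    msqrt A * msqrt A = A := by
  rw [msqrt_eq_cfc hA]; exact CFC.sqrt_mul_sqrt_self A hA.nonneg

lemma psd_diag_nonneg {n : ℕ} {A : Matrix (Fin n) (Fin n) ℂ} (hA : A.PosSemidef) (i : Fin n) :
    0 ≤ A i i := by
  exact hA.diag_nonneg

lemma psd_row_zero {n : ℕ} {A : Matrix (Fin n) (Fin n) ℂ} (hA : A.PosSemidef) (i j : Fin n)
    (h : A i i = 0) : A i j = 0 := by
  obtain ⟨B, hB⟩ := CStarAlgebra.nonneg_iff_eq_star_mul_self.mp hA.nonneg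
  rw [star_eq_conjTranspose] at hB
  subst hB
  rw [Matrix.mul_apply] at h ⊢
  have hcol : ∀ k, B k i = 0 := by
    have h0 : ∀ k ∈ Finset.univ, (0:ℂ) ≤ Bᴴ i k * B k i := by
      intro k _
      simpa [Matrix.conjTranspose_apply] using star_mul_self_nonneg (B k i)
    intro k
    have := (Finset.sum_eq_zero_iff_of_nonneg h0).mp h k (Finset.mem_univ k)
    simp only [Matrix.conjTranspose_apply] at this
    rcases mul_eq_zero.mp this with h' | h'
    · exact star_eq_zero.mp h'
    · exact h'
  refine Finset.sum_eq_zero fun k _ => ?_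
  simp [Matrix.conjTranspose_apply, hcol k]

lemma creal {z : ℂ} (h : z.im = 0) : z = (z.re : ℂ) :=
  Complex.ext (by simp) (by simp [h])

lemma triple_apply (s : Matrix (Fin 2) (Fin 2) ℂ) (e : Fin 2 → ℂ) (i j : Fin 2) :
    (s * Matrix.diagonal e * s) i j = s i 0 * e 0 * s 0 j + s i 1 * e 1 * s 1 j := by
  simp [Matrix.mul_apply, Matrix.diagonal_apply, Fin.sum_univ_two]

lemma petz_deph {γ : Matrix (Fin 2) (Fin 2) ℂ} (ω : Matrix (Fin 2) (Fin 2) ℂ)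
    (hγ : γ.PosSemidef) (hPD : (kchan dephK γ).PosDef) :
    petz dephK γ ω =
      msqrt γ * Matrix.diagonal
        (fun i => ((Real.sqrt (γ i i).re : ℂ))⁻¹ * ω i i * ((Real.sqrt (γ i i).re : ℂ))⁻¹)
        * msqrt γ := by
  have hkg : kchan dephK γ = Matrix.diagonal (fun i => γ i i) := kchan_deph γ
  have hpos : ∀ i, 0 < γ i i := Matrix.posDef_diagonal_iff.mp (hkg ▸ hPD)
  have hri : ∀ i, γ i i = ((γ i i).re : ℂ) := fun i =>
    creal ((Complex.pos_iff.mp (hpos i)).2).symm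
  have hrpos : ∀ i, 0 < (γ i i).re := fun i => (Complex.pos_iff.mp (hpos i)).1
  have hx0 : ∀ i, ((Real.sqrt (γ i i).re : ℂ)) ≠ 0 := fun i => by
    simp only [ne_eq, Complex.ofReal_eq_zero]
    exact (Real.sqrt_pos.mpr (hrpos i)).ne'
  have hmsq : msqrt (kchan dephK γ) =
      Matrix.diagonal (fun i => (Real.sqrt (γ i i).re : ℂ)) := by
    rw [hkg]
    refine msqrt_eq (Matrix.PosSemidef.diagonal ?_) ?_
    · intro i
      simp only [Pi.zero_apply]
      exact Complex.zero_le_real.mpr (Real.sqrt_nonneg _)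
    · rw [Matrix.diagonal_mul_diagonal]
      refine congrArg Matrix.diagonal ?_
      funext i
      rw [← Complex.ofReal_mul, Real.mul_self_sqrt (hrpos i).le]
      exact (hri i).symm
  have hinv : (Matrix.diagonal (fun i => (Real.sqrt (γ i i).re : ℂ)))⁻¹ =
      Matrix.diagonal (fun i => ((Real.sqrt (γ i i).re : ℂ))⁻¹) := by
    apply Matrix.inv_eq_right_inv
    rw [Matrix.diagonal_mul_diagonal, ← Matrix.diagonal_one]
    refine congrArg Matrix.diagonal ?_
    funext i
    exact mul_inv_cancel₀ (hx0 i)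
  rw [petz, hmsq, hinv]
  congr 1
  congr 1
  rw [kchanAdj_deph]
  refine congrArg Matrix.diagonal ?_
  funext i
  simp [Matrix.mul_apply, Matrix.diagonal_apply, Fin.sum_univ_two]

theorem dephasing_prior_hacking_iff {ρ ω : Matrix (Fin 2) (Fin 2) ℂ}
    (hω : IsDensity ω) (hρ : IsDensity ρ)
    (hρdiag : ρ = Matrix.diagonal (fun i => ρ i i)) :
    (∃ γ : Matrix (Fin 2) (Fin 2) ℂ, IsDensity γ ∧ (kchan dephK γ).PosDef ∧
      petz dephK γ ω = ρ) ↔ ρ = kchan dephK ω := by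
  constructor
  · rintro ⟨γ, ⟨hγpsd, hγtr⟩, hPD, hpetz⟩
    -- basic positivity facts on γ's diagonal
    have hkg : kchan dephK γ = Matrix.diagonal (fun i => γ i i) := kchan_deph γ
    have hpos : ∀ i, 0 < γ i i := Matrix.posDef_diagonal_iff.mp (hkg ▸ hPD)
    have hrpos : ∀ i, 0 < (γ i i).re := fun i => (Complex.pos_iff.mp (hpos i)).1
    set x : Fin 2 → ℂ := fun i => (Real.sqrt (γ i i).re : ℂ) with hxdef
    have hx0 : ∀ i, x i ≠ 0 := fun i => by
      simp only [hxdef, ne_eq, Complex.ofReal_eq_zero]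
      exact (Real.sqrt_pos.mpr (hrpos i)).ne'
    have hxx : ∀ i, x i * x i = γ i i := fun i => by
      rw [hxdef, ← Complex.ofReal_mul, Real.mul_self_sqrt (hrpos i).le]
      exact (creal ((Complex.pos_iff.mp (hpos i)).2).symm).symm
    set e : Fin 2 → ℂ := fun i => (x i)⁻¹ * ω i i * (x i)⁻¹ with hedef
    set s := msqrt γ with hsdef
    have hs : s.PosSemidef := msqrt_psd hγpsd
    have hss : s * s = γ := msqrt_mul_self hγpsd
    have hpz : s * Matrix.diagonal e * s = ρ := by
      rw [← hpetz, petz_deph ω hγpsd hPD]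
    -- entries
    have hE : ∀ i j : Fin 2, s i 0 * e 0 * s 0 j + s i 1 * e 1 * s 1 j = ρ i j := fun i j => by
      rw [← triple_apply, hpz]
    have herm : s 1 0 = star (s 0 1) := (hs.1.apply 1 0).symm
    have hρ01 : ρ 0 1 = 0 := by rw [hρdiag]; simp
    have hωnn : ∀ i, 0 ≤ ω i i := psd_diag_nonneg hω.1
    have hG : ∀ i j : Fin 2, s i 0 * s 0 j + s i 1 * s 1 j = γ i j := fun i j => by
      rw [← hss, Matrix.mul_apply, Fin.sum_univ_two]
    -- goal reduction
    rw [kchan_deph]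
    have key : ρ 0 0 = ω 0 0 ∧ ρ 1 1 = ω 1 1 := by
      by_cases hc : s 0 1 = 0
      · have h10 : s 1 0 = 0 := by rw [herm, hc, star_zero]
        constructor
        · have h1 := hE 0 0
          rw [hc, h10] at h1
          have hg00 := hG 0 0
          rw [hc, h10] at hg00
          have hA : s 0 0 * s 0 0 = x 0 * x 0 := by rw [hxx 0, ← hg00]; ring
          calc ρ 0 0 = s 0 0 * e 0 * s 0 0 + 0 * e 1 * 0 := h1.symm
            _ = (s 0 0 * s 0 0) * e 0 := by ring
            _ = (x 0 * x 0) * ((x 0)⁻¹ * ω 0 0 * (x 0)⁻¹) := by rw [hA]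
            _ = ω 0 0 := by field_simp [hx0 0]
        · have h1 := hE 1 1
          rw [hc, h10] at h1
          have hg11 := hG 1 1
          rw [hc, h10] at hg11
          have hA : s 1 1 * s 1 1 = x 1 * x 1 := by rw [hxx 1, ← hg11]; ring
          calc ρ 1 1 = 0 * e 0 * 0 + s 1 1 * e 1 * s 1 1 := h1.symm
            _ = (s 1 1 * s 1 1) * e 1 := by ring
            _ = (x 1 * x 1) * ((x 1)⁻¹ * ω 1 1 * (x 1)⁻¹) := by rw [hA]
            _ = ω 1 1 := by field_simp [hx0 1]
      · -- off-diagonal of s nonzero: contradiction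
        exfalso
        have ha : s 0 0 ≠ 0 := fun h0 => hc (psd_row_zero hs 0 1 h0)
        have hb : s 1 1 ≠ 0 := fun h0 => by
          have h10 : s 1 0 = 0 := psd_row_zero hs 1 0 h0
          rw [h10] at herm
          exact hc (by simpa using herm.symm)
        have h01 := hE 0 1
        rw [hρ01] at h01
        have hfac : s 0 1 * (s 0 0 * e 0 + s 1 1 * e 1) = 0 := by
          rw [← h01]; ring
        have hsum : s 0 0 * e 0 + s 1 1 * e 1 = 0 :=
          (mul_eq_zero.mp hfac).resolve_left hc
        have hxinv : ∀ i, (0:ℂ) ≤ (x i)⁻¹ := fun i => by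
          rw [hxdef]
          simp only [← Complex.ofReal_inv]
          exact Complex.zero_le_real.mpr (by positivity)
        have he : ∀ i, 0 ≤ e i := fun i =>
          mul_nonneg (mul_nonneg (hxinv i) (hωnn i)) (hxinv i)
        have hsnn : ∀ i, (0:ℂ) ≤ s i i := psd_diag_nonneg hs
        have h1 : s 0 0 * e 0 = 0 ∧ s 1 1 * e 1 = 0 :=
          (add_eq_zero_iff_of_nonneg (mul_nonneg (hsnn 0) (he 0))
            (mul_nonneg (hsnn 1) (he 1))).mp hsum
        have he0 : e 0 = 0 := (mul_eq_zero.mp h1.1).resolve_left ha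
        have he1 : e 1 = 0 := (mul_eq_zero.mp h1.2).resolve_left hb
        have hw0 : ω 0 0 = 0 := by
          have := he0
          rw [hedef] at this
          simp only at this
          rcases mul_eq_zero.mp this with h' | h'
          · rcases mul_eq_zero.mp h' with h'' | h''
            · exact absurd h'' (inv_ne_zero (hx0 0))
            · exact h''
          · exact absurd h' (inv_ne_zero (hx0 0))
        have hw1 : ω 1 1 = 0 := by
          have := he1
          rw [hedef] at this
          simp only at this
          rcases mul_eq_zero.mp this with h' | h'
          · rcases mul_eq_zero.mp h' with h'' | h''
            · exact absurd h'' (inv_ne_zero (hx0 1))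
            · exact h''
          · exact absurd h' (inv_ne_zero (hx0 1))
        have htr := hω.2
        rw [Matrix.trace] at htr
        simp [Fin.sum_univ_two, Matrix.diag, hw0, hw1] at htr
    have hfun : (fun i => ρ i i) = (fun i => ω i i) := by
      funext i
      fin_cases i
      · exact key.1
      · exact key.2
    conv_lhs => rw [hρdiag]
    rw [hfun]
  · intro h
    refine ⟨Matrix.diagonal (fun _ => (1/2 : ℂ)), ⟨?_, ?_⟩, ?_, ?_⟩
    · refine Matrix.PosSemidef.diagonal ?_
      intro i
      simp only [Pi.zero_apply]
      rw [Complex.nonneg_iff]; norm_num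
    · simp [Matrix.trace, Fin.sum_univ_two, Matrix.diagonal_apply]
    · rw [kchan_deph]
      refine Matrix.PosDef.diagonal fun i => ?_
      simp only [Matrix.diagonal_apply_eq]
      rw [Complex.pos_iff]; norm_num
    · -- compute the Petz map for the diagonal prior (1/2, 1/2)
      have hγpsd : (Matrix.diagonal (fun _ : Fin 2 => (1/2 : ℂ))).PosSemidef := by
        refine Matrix.PosSemidef.diagonal ?_
        intro i
        simp only [Pi.zero_apply]
        rw [Complex.nonneg_iff]; norm_num
      have hPD : (kchan dephK (Matrix.diagonal (fun _ : Fin 2 => (1/2 : ℂ)))).PosDef := by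
        rw [kchan_deph]
        refine Matrix.PosDef.diagonal fun i => ?_
        simp only [Matrix.diagonal_apply_eq]
        rw [Complex.pos_iff]; norm_num
      rw [petz_deph ω hγpsd hPD]
      have hsq : msqrt (Matrix.diagonal (fun _ : Fin 2 => (1/2 : ℂ))) =
          Matrix.diagonal (fun _ : Fin 2 => (Real.sqrt (1/2) : ℂ)) := by
        refine msqrt_eq (Matrix.PosSemidef.diagonal ?_) ?_
        · intro i
          simp only [Pi.zero_apply]
          exact Complex.zero_le_real.mpr (Real.sqrt_nonneg _)
        · rw [Matrix.diagonal_mul_diagonal]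
          congr 1; funext i
          rw [← Complex.ofReal_mul, Real.mul_self_sqrt (by norm_num)]
          norm_num
      rw [hsq, h, kchan_deph, Matrix.diagonal_mul_diagonal, Matrix.diagonal_mul_diagonal]
      refine congrArg Matrix.diagonal ?_
      funext i
      have hd : ((Matrix.diagonal (fun _ : Fin 2 => (1/2:ℂ))) i i) = (1/2:ℂ) :=
        Matrix.diagonal_apply_eq _ i
      rw [hd]
      have h2 : ((1/2:ℂ)).re = (1/2:ℝ) := by norm_num
      rw [h2]
      have hne : (Real.sqrt (1/2) : ℂ) ≠ 0 := by
        simp only [ne_eq, Complex.ofReal_eq_zero]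
        positivity
      field_simp
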